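/- arXiv:2008.06127 — 4 statements merged into one kernel-verified Lean document; each statement's English description precedes it below -/
import Mathlib

section
/- For positive integers a_1, ..., a_n, if [2a_1, ..., 2a_n]^+ = p/q in lowest terms with p, q > 0, then exactly one of p and q is even. -/
/-- The even continued fraction `[2a₁, 2a₂, …, 2aₙ]⁺`. -/
def ecf : List ℕ → ℚ
  | [] => 0
  | a :: l => 2 * a + 1 / ecf l

lemma ecf_aux : ∀ (l : List ℕ), l ≠ [] → (∀ a ∈ l, 1 ≤ a) →
    1 ≤ ecf l ∧ Xor' (Even (ecf l).num) (Even ((ecf l).den : ℤ))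
  | [], h, _ => absurd rfl h
  | [a], _, hpos => by
    have ha : 1 ≤ a := hpos a (by simp)
    have he : ecf [a] = ((2 * a : ℕ) : ℚ) := by
      show 2 * (a : ℚ) + 1 / ecf [] = _
      show 2 * (a : ℚ) + 1 / 0 = _
      push_cast; simp
    constructor
    · rw [he]
      exact_mod_cast Nat.one_le_iff_ne_zero.mpr (by omega)
    · rw [he, Rat.num_natCast, Rat.den_natCast]
      refine Or.inl ⟨⟨a, by push_cast; ring⟩, by decide⟩
  | a :: b :: l', _, hpos => by
    obtain ⟨hr1, hxor⟩ := ecf_aux (b :: l') (by simp) (fun x hx => hpos x (by simp [hx]))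
    set r := ecf (b :: l') with hr
    have ha : 1 ≤ a := hpos a (by simp)
    have hrpos : (0 : ℚ) < r := lt_of_lt_of_le one_pos hr1
    have hnum_pos : 0 < r.num := Rat.num_pos.mpr hrpos
    have he : ecf (a :: b :: l') = ((2 * a * r.num + r.den : ℤ) : ℚ) / (r.num : ℚ) := by
      show 2 * (a : ℚ) + 1 / r = _
      rw [eq_div_iff (by exact_mod_cast hnum_pos.ne')]
      have hd0 : (r.den : ℚ) ≠ 0 := Nat.cast_ne_zero.mpr r.den_nz
      have hinv : (1 : ℚ) / r = (r.den : ℚ) / (r.num : ℚ) := by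
        rw [one_div, Rat.inv_def, Rat.divInt_eq_div]; norm_cast
      rw [hinv]
      push_cast
      field_simp
    have hcop : Nat.Coprime (2 * a * r.num + r.den : ℤ).natAbs r.num.natAbs := by
      have := r.reduced
      have h2 : IsCoprime (r.den : ℤ) r.num := by
        rw [Int.isCoprime_iff_gcd_eq_one, Int.gcd_comm]
        simpa [Int.gcd] using this
      have h3 : IsCoprime (2 * a * r.num + r.den : ℤ) r.num := by
        have := h2.add_mul_right_left (2 * (a : ℤ))
        rwa [add_comm] at this
      rwa [Int.isCoprime_iff_gcd_eq_one, Int.gcd] at h3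
    have hnum := Rat.num_div_eq_of_coprime hnum_pos hcop
    have hden := Rat.den_div_eq_of_coprime hnum_pos hcop
    rw [← he] at hnum hden
    constructor
    · show 1 ≤ 2 * (a : ℚ) + 1 / r
      have : (0 : ℚ) < 1 / r := by positivity
      have : (1 : ℚ) ≤ 2 * a := by
        have : (1 : ℚ) ≤ (a : ℚ) := by exact_mod_cast ha
        linarith
      linarith
    · rw [hnum, hden]
      have heven : Even (2 * (a : ℤ) * r.num) := ⟨a * r.num, by ring⟩
      have hpar : Even (2 * (a : ℤ) * r.num + r.den) ↔ Even (r.den : ℤ) := by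
        constructor
        · intro h
          have := (Int.even_add.mp h).mp heven
          exact this
        · intro h
          exact heven.add h
      rcases hxor with ⟨h1, h2⟩ | ⟨h1, h2⟩
      · exact Or.inr ⟨h1, fun h => h2 (hpar.mp h)⟩
      · exact Or.inl ⟨hpar.mpr h1, h2⟩

/-- For positive integers `a₁, …, aₙ`, if `[2a₁, …, 2aₙ]⁺ = p/q` in lowest terms with
`p, q > 0`, then exactly one of `p` and `q` is even. -/
theorem stmt_1 (l : List ℕ) (hne : l ≠ []) (hpos : ∀ a ∈ l, 1 ≤ a) :
    Xor' (Even (ecf l).num) (Even ((ecf l).den : ℤ)) := by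
  exact (ecf_aux l hne hpos).2
end

section
/- For positive integers a_1, ..., a_n, write [2a_1, ..., 2a_n]^+ = p_n/q_n in lowest terms. Then p_n is even if and only if n is odd. -/
lemma ecf_key (a : ℕ) (ha : 1 ≤ a) (r : ℚ) (hr : 0 < r) :
    0 < (2 * a + 1 / r : ℚ) ∧ (2 * a + 1 / r : ℚ).num = 2 * a * r.num + r.den ∧
      ((2 * a + 1 / r : ℚ).den : ℤ) = r.num := by
  have hnum : (0:ℤ) < r.num := Rat.num_pos.mpr hr
  have hcop : Nat.Coprime (2 * a * r.num + r.den).natAbs r.num.natAbs := by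
    have h1 : Nat.Coprime r.num.natAbs r.den := r.reduced
    have : ((2 * a * r.num + r.den).natAbs : ℤ) % (r.num.natAbs : ℤ)
        = (r.den : ℤ) % (r.num.natAbs : ℤ) := by
      rw [Int.natAbs_of_nonneg (by positivity)]
      rw [Int.natAbs_of_nonneg hnum.le]
      rw [show (2 * (a:ℤ) * r.num + r.den) = r.den + r.num * (2 * a) by ring,
        Int.add_mul_emod_self_left]
    have hmod : (2 * a * r.num + r.den).natAbs % r.num.natAbs = r.den % r.num.natAbs := by
      exact_mod_cast this
    unfold Nat.Coprime
    rw [Nat.gcd_comm, Nat.gcd_rec, hmod, ← Nat.gcd_rec, Nat.gcd_comm]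
    exact h1.symm
  have heq : (2 * a + 1 / r : ℚ) = ((2 * a * r.num + r.den : ℤ) : ℚ) / (r.num : ℚ) := by
    have hn0 : ((r.num : ℚ)) ≠ 0 := by exact_mod_cast hnum.ne'
    rw [eq_div_iff hn0]
    have h1 : (1 / r) * (r.num : ℚ) = r.den := by
      rw [← Rat.mul_den_eq_num r]
      field_simp
    push_cast
    rw [add_mul, h1]
  refine ⟨?_, ?_, ?_⟩
  · have : (0:ℚ) < 2 * a := by positivity
    have : (0:ℚ) < 1 / r := by positivity
    positivity
  · rw [heq]; exact Rat.num_div_eq_of_coprime hnum hcop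
  · rw [heq]; exact Rat.den_div_eq_of_coprime hnum hcop

lemma ecf_main (l : List ℕ) (hne : l ≠ []) (hpos : ∀ a ∈ l, 1 ≤ a) :
    0 < ecf l ∧ (Even (ecf l).num ↔ Odd l.length) ∧
      (Even (ecf l).den ↔ Even l.length) := by
  induction l with
  | nil => exact absurd rfl hne
  | cons a l ih =>
    have ha : 1 ≤ a := hpos a (List.mem_cons_self ..)
    rcases eq_or_ne l [] with rfl | hl
    · have : ecf [a] = 2 * a := by simp [ecf]
      rw [this]
      refine ⟨by positivity, ?_, ?_⟩
      · simp only [List.length_singleton]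
        constructor
        · intro _; exact odd_one
        · intro _
          have : ((2 * a : ℚ)).num = 2 * a := by
            rw [show ((2 * a : ℚ)) = ((2 * a : ℤ) : ℚ) by push_cast; ring, Rat.num_intCast]
          rw [this]; exact even_two_mul _
      · have : ((2 * a : ℚ)).den = 1 := by
          rw [show ((2 * a : ℚ)) = ((2 * a : ℤ) : ℚ) by push_cast; ring, Rat.den_intCast]
        simp [this]
    · obtain ⟨hr, hnum, hden⟩ := ih hl (fun b hb => hpos b (List.mem_cons_of_mem _ hb))
      have h := ecf_key a ha (ecf l) hr
      have hecf : ecf (a :: l) = 2 * a + 1 / ecf l := rfl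
      rw [hecf]
      refine ⟨h.1, ?_, ?_⟩
      · rw [h.2.1]
        have : Even (2 * (a:ℤ) * (ecf l).num + ((ecf l).den : ℤ)) ↔
            Even ((ecf l).den : ℤ) := by
          simp [Int.even_add, Int.even_mul]
        rw [this, Int.even_coe_nat, hden, List.length_cons]
        rw [Nat.odd_add_one, Nat.not_odd_iff_even]
      · have : ((2 * (a:ℚ) + 1 / ecf l).den : ℤ) = (ecf l).num := h.2.2
        have he : Even ((2 * (a:ℚ) + 1 / ecf l).den) ↔ Even (ecf l).num := by
          rw [← Int.even_coe_nat, this]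
        rw [he, hnum, List.length_cons, Nat.even_add_one, Nat.not_even_iff_odd]

/-- For positive integers `a₁, …, aₙ`, writing `[2a₁, …, 2aₙ]⁺ = pₙ/qₙ` in lowest
terms, the numerator `pₙ` is even if and only if `n` is odd. -/
theorem stmt_2 (l : List ℕ) (hne : l ≠ []) (hpos : ∀ a ∈ l, 1 ≤ a) :
    Even (ecf l).num ↔ Odd l.length := by
  exact (ecf_main l hne hpos).2.1
end

section
/- Every rational number p/q with p > q > 0 coprime and exactly one of p, q even admits a (unique) even continued fraction expansion p/q = [2a_1, 2a_2, ..., 2a_n]^+ with all a_i nonzero integers. -/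
/-- The even continued fraction `[2a₁, 2a₂, …, 2aₙ]⁺` with integer coefficients. -/
def ecfZ : List ℤ → ℚ
  | [] => 0
  | a :: l => 2 * a + 1 / ecfZ l

lemma ecfZ_big : ∀ l : List ℤ, l ≠ [] → (∀ a ∈ l, a ≠ 0) → 1 < |ecfZ l|
  | [], h, _ => absurd rfl h
  | [a], _, hn => by
      have ha : a ≠ 0 := hn a (by simp)
      have h1 : (1:ℚ) ≤ |(a:ℚ)| := by
        rw [← Int.cast_abs]
        exact_mod_cast Int.one_le_abs ha
      show 1 < |2 * (a:ℚ) + 1 / ecfZ []|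
      have h0 : ecfZ ([] : List ℤ) = 0 := rfl
      rw [h0, div_zero, add_zero, abs_mul, show |(2:ℚ)| = 2 by norm_num]
      linarith
  | a :: b :: l, _, hn => by
      have ha : a ≠ 0 := hn a (by simp)
      have h1 : (1:ℚ) ≤ |(a:ℚ)| := by
        rw [← Int.cast_abs]
        exact_mod_cast Int.one_le_abs ha
      have ih := ecfZ_big (b :: l) (by simp) (fun x hx => hn x (by simp [hx]))
      set y := ecfZ (b :: l) with hy
      have hy0 : y ≠ 0 := by
        intro h; rw [h] at ih; simp at ih; linarith
      have hinv : |1 / y| < 1 := by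
        rw [abs_div, abs_one, div_lt_one (by positivity)]
        exact ih
      show 1 < |2 * (a:ℚ) + 1 / y|
      have h2 : |2 * (a:ℚ)| ≤ |2 * (a:ℚ) + 1 / y| + |1 / y| := by
        calc |2 * (a:ℚ)| = |(2 * (a:ℚ) + 1 / y) - 1 / y| := by ring_nf
          _ ≤ |2 * (a:ℚ) + 1 / y| + |1 / y| := abs_sub _ _
      have h3 : (2:ℚ) ≤ |2 * (a:ℚ)| := by
        rw [abs_mul, show |(2:ℚ)| = 2 by norm_num]; linarith
      linarith

lemma ecfZ_ne_zero (l : List ℤ) (h1 : l ≠ []) (h2 : ∀ a ∈ l, a ≠ 0) : ecfZ l ≠ 0 := by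
  intro h
  have := ecfZ_big l h1 h2
  rw [h] at this
  simp at this
  linarith

lemma ecfZ_inv_small (l : List ℤ) (hn : ∀ a ∈ l, a ≠ 0) : |1 / ecfZ l| < 1 := by
  rcases l with _ | ⟨a, l⟩
  · show |1 / ecfZ []| < 1
    have h0 : ecfZ ([] : List ℤ) = 0 := rfl
    rw [h0]; simp
  · have ih := ecfZ_big (a :: l) (by simp) hn
    rw [abs_div, abs_one, div_lt_one (by positivity)]
    exact ih

lemma ecfZ_unique : ∀ l m : List ℤ, (∀ a ∈ l, a ≠ 0) → (∀ a ∈ m, a ≠ 0) →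
    ecfZ l = ecfZ m → l = m
  | [], [], _, _, _ => rfl
  | [], b :: m, _, hm, h => by
      exfalso
      have hb := ecfZ_ne_zero (b :: m) (by simp) hm
      have h0 : ecfZ ([] : List ℤ) = 0 := rfl
      rw [h0] at h
      exact hb h.symm
  | a :: l, [], hl, _, h => by
      exfalso
      have hb := ecfZ_ne_zero (a :: l) (by simp) hl
      have h0 : ecfZ ([] : List ℤ) = 0 := rfl
      rw [h0] at h
      exact hb h
  | a :: l, b :: m, hl, hm, h => by
      have hl' : ∀ x ∈ l, x ≠ 0 := fun x hx => hl x (by simp [hx])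
      have hm' : ∀ x ∈ m, x ≠ 0 := fun x hx => hm x (by simp [hx])
      have hu : |1 / ecfZ l| < 1 := ecfZ_inv_small l hl'
      have hv : |1 / ecfZ m| < 1 := ecfZ_inv_small m hm'
      have heq : 2 * (a:ℚ) + 1 / ecfZ l = 2 * (b:ℚ) + 1 / ecfZ m := h
      have hab : a = b := by
        by_contra hne
        have h1 : (1:ℚ) ≤ |(a:ℚ) - (b:ℚ)| := by
          rw [← Int.cast_sub, ← Int.cast_abs]
          exact_mod_cast Int.one_le_abs (sub_ne_zero.mpr hne)
        have h2 : 2 * (a:ℚ) - 2 * (b:ℚ) = 1 / ecfZ m - 1 / ecfZ l := by linarith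
        have h4 : |2 * (a:ℚ) - 2 * (b:ℚ)| = 2 * |(a:ℚ) - (b:ℚ)| := by
          rw [show 2 * (a:ℚ) - 2 * (b:ℚ) = 2 * ((a:ℚ) - (b:ℚ)) by ring, abs_mul]
          norm_num
        have h5 := abs_sub (1 / ecfZ m) (1 / ecfZ l)
        rw [← h2, h4] at h5
        linarith
      subst hab
      have hinv : 1 / ecfZ l = 1 / ecfZ m := by linarith
      have htail : l = m := by
        by_cases hle : l = []
        · subst hle
          by_cases hme : m = []
          · exact hme.symm
          · exfalso
            have hz := ecfZ_ne_zero m hme hm'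
            have h0 : ecfZ ([] : List ℤ) = 0 := rfl
            rw [h0] at hinv
            simp at hinv
            exact hz hinv.symm
        · by_cases hme : m = []
          · exfalso
            have hz := ecfZ_ne_zero l hle hl'
            subst hme
            have h0 : ecfZ ([] : List ℤ) = 0 := rfl
            rw [h0] at hinv
            simp at hinv
            exact hz hinv
          · have hne1 : ecfZ l ≠ 0 := ecfZ_ne_zero l hle hl'
            have hne2 : ecfZ m ≠ 0 := ecfZ_ne_zero m hme hm'
            have heq2 : ecfZ l = ecfZ m := by
              field_simp at hinv
              exact hinv.symm
            exact ecfZ_unique l m hl' hm' heq2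
      rw [htail]

lemma ecfZ_exists : ∀ n : ℕ, ∀ p q : ℤ, q.natAbs = n → 0 < q → q < |p| →
    Int.gcd p q = 1 → Xor' (Even p) (Even q) →
    ∃ l : List ℤ, l ≠ [] ∧ (∀ a ∈ l, a ≠ 0) ∧ ecfZ l = (p : ℚ) / (q : ℚ) := by
  intro n
  induction n using Nat.strong_induction_on with
  | _ n ih =>
    intro p q hn hq hpq hcop hpar
    rcases eq_or_lt_of_le (show (1:ℤ) ≤ q by omega) with hq1 | hq1
    · -- q = 1
      have hq1 : q = 1 := hq1.symm
      subst hq1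
      have hpe : Even p := by
        rcases hpar with ⟨h, _⟩ | ⟨h, _⟩
        · exact h
        · exact absurd h (by decide)
      obtain ⟨a, ha⟩ := hpe
      refine ⟨[a], by simp, ?_, ?_⟩
      · intro x hx
        simp at hx
        subst hx
        intro h0
        rw [h0] at ha
        simp at ha
        rw [ha] at hpq
        simp at hpq
      · show 2 * (a:ℚ) + 1 / ecfZ [] = (p:ℚ) / ((1:ℤ):ℚ)
        have h0 : ecfZ ([] : List ℤ) = 0 := rfl
        rw [h0, ha]
        push_cast
        ring
    · -- 1 < q
      obtain ⟨a, r, hpval, hrlb, hrub⟩ :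
          ∃ a r : ℤ, p = 2 * q * a + r ∧ -q ≤ r ∧ r < q := by
        refine ⟨(p + q) / (2 * q), p - 2 * q * ((p + q) / (2 * q)), by ring, ?_, ?_⟩
        · have hmod : 2 * q * ((p + q) / (2 * q)) + (p + q) % (2 * q) = p + q :=
            Int.mul_ediv_add_emod _ _
          have h0 : 0 ≤ (p + q) % (2 * q) := Int.emod_nonneg _ (by omega)
          omega
        · have hmod : 2 * q * ((p + q) / (2 * q)) + (p + q) % (2 * q) = p + q :=
            Int.mul_ediv_add_emod _ _
          have h1 : (p + q) % (2 * q) < 2 * q := Int.emod_lt_of_pos _ (by omega)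
          omega
      have hdvd : q ∣ r → q ∣ p := by
        intro h
        rw [hpval]
        exact dvd_add ⟨2 * a, by ring⟩ h
      have hqndvd : ¬ q ∣ p := by
        intro h
        have : ((Int.gcd p q : ℕ) : ℤ) = q := Int.gcd_eq_right hq.le h
        rw [hcop] at this
        omega
      have hrne : r ≠ 0 := by
        intro h
        exact hqndvd (hdvd (h ▸ dvd_zero q))
      have hrne' : r ≠ -q := by
        intro h
        exact hqndvd (hdvd (h ▸ dvd_neg.mpr dvd_rfl))
      have hrlb' : -q < r := lt_of_le_of_ne hrlb (Ne.symm hrne')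
      have hgcd : Int.gcd q r = 1 := by
        have hc : IsCoprime (q:ℤ) p := by
          rw [Int.isCoprime_iff_gcd_eq_one, Int.gcd_comm]
          exact hcop
        have hc2 : IsCoprime (q:ℤ) r := by
          have := hc.add_mul_left_right (-(2 * a))
          have he : p + q * (-(2 * a)) = r := by rw [hpval]; ring
          rwa [he] at this
        rwa [Int.isCoprime_iff_gcd_eq_one] at hc2
      have hparr : Xor' (Even q) (Even r) := by
        have hpr : Even r ↔ Even p := by
          constructor
          · intro h
            rw [hpval, show 2 * q * a = 2 * (q * a) by ring]
            exact (even_two_mul _).add h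
          · intro h
            have : r = p - 2 * (q * a) := by rw [hpval]; ring
            rw [this]
            exact h.sub (even_two_mul _)
        rcases hpar with ⟨h1', h2'⟩ | ⟨h1', h2'⟩
        · exact Or.inr ⟨hpr.mpr h1', h2'⟩
        · exact Or.inl ⟨h1', fun h => h2' (hpr.mp h)⟩
      have hrabs : r.natAbs < n := by omega
      have hane : a ≠ 0 := by
        intro h
        rw [h] at hpval
        simp at hpval
        have : |p| < q := by rw [hpval]; rw [abs_lt]; omega
        omega
      -- get the tail list
      have htail : ∃ l : List ℤ, l ≠ [] ∧ (∀ x ∈ l, x ≠ 0) ∧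
          ecfZ l = (q : ℚ) / (r : ℚ) := by
        rcases lt_or_gt_of_ne hrne with hrneg | hrpos
        · obtain ⟨l, hl1, hl2, hl3⟩ := ih r.natAbs hrabs (-q) (-r) (by simp) (by omega)
            (by rw [abs_neg, abs_of_pos hq]; omega)
            (by rw [Int.neg_gcd, Int.gcd_neg]; exact hgcd)
            (by
              rcases hparr with ⟨h1', h2'⟩ | ⟨h1', h2'⟩
              · exact Or.inl ⟨h1'.neg, fun h => h2' (by simpa using h.neg)⟩
              · exact Or.inr ⟨h1'.neg, fun h => h2' (by simpa using h.neg)⟩)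
          refine ⟨l, hl1, hl2, ?_⟩
          rw [hl3]
          push_cast
          rw [neg_div_neg_eq]
        · obtain ⟨l, hl1, hl2, hl3⟩ := ih r.natAbs hrabs q r rfl
            hrpos (by rw [abs_of_pos hq]; omega) hgcd hparr
          exact ⟨l, hl1, hl2, hl3⟩
      obtain ⟨l, hl1, hl2, hl3⟩ := htail
      refine ⟨a :: l, by simp, ?_, ?_⟩
      · intro x hx
        rcases List.mem_cons.mp hx with h | h
        · subst h; exact hane
        · exact hl2 x h
      · show 2 * (a:ℚ) + 1 / ecfZ l = (p:ℚ) / (q:ℚ)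
        rw [hl3, one_div_div]
        have hq0 : (q:ℚ) ≠ 0 := by exact_mod_cast hq.ne'
        rw [hpval]
        push_cast
        field_simp

/-- Every rational `p/q` with `p > q > 0` coprime and exactly one of `p, q` even admits a
unique even continued fraction expansion `p/q = [2a₁, …, 2aₙ]⁺` with all `aᵢ` nonzero
integers. -/
theorem stmt_4 (p q : ℤ) (hq : 0 < q) (hpq : q < p) (hcop : Int.gcd p q = 1)
    (hparity : Xor' (Even p) (Even q)) :
    ∃! l : List ℤ, l ≠ [] ∧ (∀ a ∈ l, a ≠ 0) ∧ ecfZ l = (p : ℚ) / (q : ℚ) := by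
  obtain ⟨l, hl1, hl2, hl3⟩ := ecfZ_exists q.natAbs p q rfl hq
    (by rw [abs_of_pos (by linarith)]; exact hpq) hcop hparity
  refine ⟨l, ⟨hl1, hl2, hl3⟩, ?_⟩
  rintro m ⟨hm1, hm2, hm3⟩
  exact ecfZ_unique m l hm2 hl2 (hm3.trans hl3.symm)
end

section
/- If a real polynomial p(t) of even degree 2d satisfies t^{2d} p(1/t) = p(t) (palindromic) and all roots of p are real and positive, then the roots come in pairs r, 1/r, and for every ω on the unit circle with ω ≠ ±1 the value ω^{-d} p(ω) is real and nonzero of constant sign; in particular p has no roots on the unit circle other than possibly ±1, and if p(1) ≠ 0 and p(-1) ≠ 0 then p has no unit-circle roots at all. -/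
open Polynomial

private lemma pal_eval {K : Type*} [Field K] (n : ℕ) (q : K[X])
    (hdeg : q.natDegree ≤ n) (h : ∀ k ≤ n, q.coeff k = q.coeff (n - k))
    (z : K) (hz : z ≠ 0) : q.eval z = z ^ n * q.eval z⁻¹ := by
  rw [eval_eq_sum_range' (lt_of_le_of_lt hdeg (Nat.lt_succ_self n)),
      eval_eq_sum_range' (lt_of_le_of_lt hdeg (Nat.lt_succ_self n)),
      Finset.mul_sum, ← Finset.sum_range_reflect]
  apply Finset.sum_congr rfl
  intro k hk
  have hk' : k ≤ n := Nat.lt_succ_iff.mp (Finset.mem_range.mp hk)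
  have h1 : n + 1 - 1 - k = n - k := by omega
  rw [h1, ← h k hk', inv_pow]
  have h2 : z ^ n = z ^ (n - k) * z ^ k := by rw [← pow_add]; congr 1; omega
  rw [h2]
  field_simp

private lemma sign_const {g : ℝ → ℝ} (hg : Continuous g) {a b : ℝ} (hab : a ≤ b)
    (h : ∀ t ∈ Set.Icc a b, g t ≠ 0) : Real.sign (g a) = Real.sign (g b) := by
  have ha := h a ⟨le_refl a, hab⟩
  have hb := h b ⟨hab, le_refl b⟩
  rcases ha.lt_or_gt with ha' | ha' <;> rcases hb.lt_or_gt with hb' | hb'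
  · rw [Real.sign_of_neg ha', Real.sign_of_neg hb']
  · obtain ⟨c, hc, hc0⟩ := intermediate_value_Icc hab hg.continuousOn
      (Set.mem_Icc.mpr ⟨ha'.le, hb'.le⟩)
    exact absurd hc0 (h c hc)
  · obtain ⟨c, hc, hc0⟩ := intermediate_value_Icc' hab hg.continuousOn
      (Set.mem_Icc.mpr ⟨hb'.le, ha'.le⟩)
    exact absurd hc0 (h c hc)
  · rw [Real.sign_of_pos ha', Real.sign_of_pos hb']

/-- If a real polynomial `p` of even degree `2d` is palindromic and all its (complex)
roots are real and positive, then its roots come in pairs `r, 1/r`; for every `ω` on the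
unit circle with `ω ≠ ±1` the value `ω⁻ᵈ p(ω)` is a nonzero real number of constant sign;
in particular `p` has no unit-circle roots other than possibly `±1`, and if moreover
`p(1) ≠ 0` and `p(-1) ≠ 0` then `p` has no roots on the unit circle at all. -/
theorem stmt_12 (d : ℕ) (hd : 0 < d) (p : Polynomial ℝ) (hp : p ≠ 0)
    (hdeg : p.natDegree = 2 * d)
    (hpal : ∀ k ≤ 2 * d, p.coeff k = p.coeff (2 * d - k))
    (hroots : ∀ z : ℂ, (p.map (algebraMap ℝ ℂ)).IsRoot z → ∃ x : ℝ, 0 < x ∧ z = (x : ℂ)) :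
    (∀ r : ℝ, p.IsRoot r → p.IsRoot r⁻¹) ∧
      (∃ σ : ℝ, (σ = 1 ∨ σ = -1) ∧
        ∀ ω : ℂ, ‖ω‖ = 1 → ω ≠ 1 → ω ≠ -1 →
          ∃ x : ℝ, x ≠ 0 ∧ Real.sign x = σ ∧
            (p.map (algebraMap ℝ ℂ)).eval ω = ω ^ d * (x : ℂ)) ∧
      (∀ ω : ℂ, ‖ω‖ = 1 → ω ≠ 1 → ω ≠ -1 →
        (p.map (algebraMap ℝ ℂ)).eval ω ≠ 0) ∧
      (p.eval 1 ≠ 0 → p.eval (-1) ≠ 0 →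
        ∀ ω : ℂ, ‖ω‖ = 1 → (p.map (algebraMap ℝ ℂ)).eval ω ≠ 0) := by
  set q : ℂ[X] := p.map (algebraMap ℝ ℂ) with hqdef
  -- evaluation at real points
  have hqR : ∀ r : ℝ, q.eval (r : ℂ) = ((p.eval r : ℝ) : ℂ) := by
    intro r
    rw [hqdef, eval_map, ← Complex.coe_algebraMap, eval₂_at_apply]
  -- degree and palindromy over ℂ
  have hqdeg : q.natDegree ≤ 2 * d := hdeg ▸ natDegree_map_le
  have hqpal : ∀ k ≤ 2 * d, q.coeff k = q.coeff (2 * d - k) := by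
    intro k hk
    rw [hqdef, coeff_map, coeff_map, hpal k hk]
  have hA : ∀ z : ℂ, z ≠ 0 → q.eval z = z ^ (2 * d) * q.eval z⁻¹ :=
    fun z hz => pal_eval (2 * d) q hqdeg hqpal z hz
  -- no roots on circle except possibly 1
  have hnz : ∀ ω : ℂ, ‖ω‖ = 1 → ω ≠ 1 → q.eval ω ≠ 0 := by
    intro ω hω h1 h0
    obtain ⟨x, hx, rfl⟩ := hroots ω h0
    rw [Complex.norm_real, Real.norm_eq_abs, abs_of_pos hx] at hω
    exact h1 (by rw [hω]; norm_num)
  -- conjugation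
  have hconj : ∀ z : ℂ, (starRingEnd ℂ) (q.eval z) = q.eval ((starRingEnd ℂ) z) := by
    intro z
    rw [hqdef, eval_map, eval_map, hom_eval₂]
    congr 1
    ext x
    simp
  set F : ℂ → ℝ := fun ω => ((starRingEnd ℂ) ω ^ d * q.eval ω).re with hFdef
  have hFcont : Continuous F := by
    apply Complex.continuous_re.comp
    exact (Complex.continuous_conj.pow d).mul q.continuous
  -- realness on the circle
  have hreal : ∀ ω : ℂ, ‖ω‖ = 1 →
      (starRingEnd ℂ) ω ^ d * q.eval ω = ((F ω : ℝ) : ℂ) := by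
    intro ω hω
    have hω0 : ω ≠ 0 := by
      intro h; rw [h] at hω; simp at hω
    have hinv : (starRingEnd ℂ) ω = ω⁻¹ := by
      apply eq_inv_of_mul_eq_one_left
      rw [mul_comm, Complex.mul_conj, Complex.normSq_eq_norm_sq, hω]
      norm_num
    have hx : (starRingEnd ℂ) ((starRingEnd ℂ) ω ^ d * q.eval ω)
        = (starRingEnd ℂ) ω ^ d * q.eval ω := by
      rw [map_mul, map_pow, Complex.conj_conj, hconj, hinv, hA ω hω0, inv_pow]
      have h2 : ω ^ (2 * d) = ω ^ d * ω ^ d := by rw [two_mul, pow_add]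
      rw [h2]
      field_simp
    have := Complex.conj_eq_iff_re.mp hx
    rw [hFdef]
    exact this.symm
  -- F is nonzero on circle minus {1}
  have hFne : ∀ ω : ℂ, ‖ω‖ = 1 → ω ≠ 1 → F ω ≠ 0 := by
    intro ω hω h1 h0
    have hω0 : ω ≠ 0 := by intro h; rw [h] at hω; simp at hω
    have := hreal ω hω
    rw [h0] at this
    push_cast at this
    rcases mul_eq_zero.mp this with h | h
    · exact pow_ne_zero d (by simpa using hω0 : (starRingEnd ℂ) ω ≠ 0) h
    · exact hnz ω hω h1 h
  -- F is conjugation-invariant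
  have hFsymm : ∀ ω : ℂ, F ((starRingEnd ℂ) ω) = F ω := by
    intro ω
    have key : ((starRingEnd ℂ) ((starRingEnd ℂ) ω)) ^ d * q.eval ((starRingEnd ℂ) ω)
        = (starRingEnd ℂ) ((starRingEnd ℂ) ω ^ d * q.eval ω) := by
      rw [map_mul, map_pow, hconj]
    show ((starRingEnd ℂ) ((starRingEnd ℂ) ω) ^ d * q.eval ((starRingEnd ℂ) ω)).re
        = ((starRingEnd ℂ) ω ^ d * q.eval ω).re
    rw [key, Complex.conj_re]
  -- circle parametrization facts
  have hcirc : ∀ t : ℝ, ‖Complex.exp (t * Complex.I)‖ = 1 :=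
    fun t => Complex.norm_exp_ofReal_mul_I t
  have hne1 : ∀ t : ℝ, 0 < t → t < Real.pi → Complex.exp ((t : ℂ) * Complex.I) ≠ 1 := by
    intro t ht0 htpi h
    have hs : 0 < Real.sin t := Real.sin_pos_of_pos_of_lt_pi ht0 htpi
    have : (Complex.exp ((t : ℂ) * Complex.I)).im = Real.sin t := by
      rw [Complex.exp_ofReal_mul_I_im]
    rw [h] at this
    simp at this
    linarith
  set g : ℝ → ℝ := fun t => F (Complex.exp ((t : ℂ) * Complex.I)) with hgdef
  have hgcont : Continuous g :=
    hFcont.comp (Complex.continuous_exp.comp (Complex.continuous_ofReal.mul continuous_const))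
  have hpi2 : Complex.exp ((((Real.pi / 2 : ℝ)) : ℂ) * Complex.I) = Complex.I := by
    rw [Complex.exp_mul_I, ← Complex.ofReal_cos, ← Complex.ofReal_sin,
      Real.cos_pi_div_two, Real.sin_pi_div_two]
    simp
  have hno : ∀ a b : ℝ, 0 < a → b < Real.pi → ∀ t ∈ Set.Icc a b, g t ≠ 0 := by
    intro a b ha hb t ht
    exact hFne _ (hcirc t) (hne1 t (lt_of_lt_of_le ha ht.1) (lt_of_le_of_lt ht.2 hb))
  have hIcirc : ‖Complex.I‖ = 1 := Complex.norm_I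
  have hFI : F Complex.I ≠ 0 := hFne Complex.I hIcirc (by intro h; have := congrArg Complex.im h; simp at this)
  have hpipos := Real.pi_pos
  -- sign is constant on the upper half circle
  have hupper : ∀ ω : ℂ, ‖ω‖ = 1 → 0 < ω.im →
      Real.sign (F ω) = Real.sign (F Complex.I) := by
    intro ω hω himpos
    set θ := Complex.arg ω with hθdef
    have hsin : Real.sin θ = ω.im := by
      rw [hθdef, Complex.sin_arg, hω, div_one]
    have hθpi : θ ≤ Real.pi := Complex.arg_le_pi ω
    have hθnegpi : -Real.pi < θ := Complex.neg_pi_lt_arg ω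
    have hθ2 : θ < Real.pi := by
      rcases lt_or_eq_of_le hθpi with h | h
      · exact h
      · exfalso; rw [h, Real.sin_pi] at hsin; linarith
    have hθ1 : 0 < θ := by
      by_contra h
      push_neg at h
      have h1 : 0 ≤ Real.sin (-θ) :=
        Real.sin_nonneg_of_nonneg_of_le_pi (by linarith) (by linarith)
      rw [Real.sin_neg] at h1
      linarith
    have hexp : Complex.exp ((θ : ℂ) * Complex.I) = ω := by
      have := Complex.norm_mul_exp_arg_mul_I ω
      rwa [hω, Complex.ofReal_one, one_mul] at this
    have hgθ : g θ = F ω := by rw [hgdef]; simp only; rw [hexp]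
    have hgI : g (Real.pi / 2) = F Complex.I := by rw [hgdef]; simp only; rw [hpi2]
    rcases le_total θ (Real.pi / 2) with h | h
    · have := sign_const hgcont h (hno θ (Real.pi / 2) hθ1 (by linarith))
      rwa [hgθ, hgI] at this
    · have := sign_const hgcont h (hno (Real.pi / 2) θ (by linarith) hθ2)
      rw [hgθ, hgI] at this
      exact this.symm
  refine ⟨?_, ⟨Real.sign (F Complex.I), ?_, ?_⟩, ?_, ?_⟩
  · -- roots come in pairs r, 1/r
    intro r hr
    have hr' : q.IsRoot (r : ℂ) := by
      show q.eval _ = 0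
      rw [hqR]
      exact_mod_cast hr
    obtain ⟨x, hx, hxe⟩ := hroots _ hr'
    have hrx : r = x := by exact_mod_cast hxe
    have hr0 : r ≠ 0 := by rw [hrx]; exact ne_of_gt hx
    have hre := pal_eval (2 * d) p (le_of_eq hdeg) hpal r⁻¹ (inv_ne_zero hr0)
    rw [inv_inv] at hre
    show p.eval r⁻¹ = 0
    rw [hre, show p.eval r = 0 from hr, mul_zero]
  · -- σ = ±1
    rcases hFI.lt_or_gt with h | h
    · right; exact Real.sign_of_neg h
    · left; exact Real.sign_of_pos h
  · -- main sign statement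
    intro ω hω h1 hm1
    refine ⟨F ω, hFne ω hω h1, ?_, ?_⟩
    · rcases lt_trichotomy ω.im 0 with h | h | h
      · have habs : ‖(starRingEnd ℂ) ω‖ = 1 := by
          rw [Complex.norm_conj]; exact hω
        have him : 0 < ((starRingEnd ℂ) ω).im := by
          rw [Complex.conj_im]; linarith
        have := hupper _ habs him
        rwa [hFsymm] at this
      · exfalso
        have hωr : ω = ((ω.re : ℝ) : ℂ) := Complex.ext rfl (by simp [h])
        rw [hωr, Complex.norm_real, Real.norm_eq_abs] at hω
        rcases abs_eq (le_refl (0:ℝ) |>.trans zero_le_one) |>.mp hω with h' | h'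
        · exact h1 (by rw [hωr, h']; norm_num)
        · exact hm1 (by rw [hωr, h']; norm_num)
      · exact hupper ω hω h
    · have hre := hreal ω hω
      have hc : ω ^ d * (starRingEnd ℂ) ω ^ d = 1 := by
        rw [← mul_pow, Complex.mul_conj, Complex.normSq_eq_norm_sq, hω]
        norm_num
      calc q.eval ω = (ω ^ d * (starRingEnd ℂ) ω ^ d) * q.eval ω := by rw [hc, one_mul]
        _ = ω ^ d * ((F ω : ℝ) : ℂ) := by rw [mul_assoc, hre]
  · -- no circle roots off ±1
    intro ω hω h1 _
    exact hnz ω hω h1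
  · -- no circle roots at all
    intro h1 hm1 ω hω h0
    obtain ⟨x, hx, rfl⟩ := hroots ω h0
    rw [Complex.norm_real, Real.norm_eq_abs, abs_of_pos hx] at hω
    subst hω
    have h2 : q.eval ((1 : ℝ) : ℂ) = 0 := h0
    rw [hqR] at h2
    exact h1 (by exact_mod_cast h2)
end
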